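/- Let M be a simple cuspidal weight module over a reductive complex Lie algebra g, meaning every nonzero root vector acts injectively on M. Then every nonzero root vector acts bijectively on M, and all weight spaces of M in its support have the same (finite) dimension. -/

import Mathlib

/-- The weight space, for the weight `χ : H → ℂ`, of a module `N` over a complex Lie
algebra `g` with respect to a subalgebra `H` (a Cartan subalgebra in the applications).
Applying this to `N := g` with the adjoint action yields the root spaces of `g`. -/
def wtSpace {g : Type*} [LieRing g] [LieAlgebra ℂ g] (H : LieSubalgebra ℂ g)
    (N : Type*) [AddCommGroup N] [Module ℂ N] [LieRingModule g N] [LieModule ℂ g N]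
    (χ : H → ℂ) : Submodule ℂ N where
  carrier := {v | ∀ x : H, ⁅(x : g), v⁆ = χ x • v}
  add_mem' := by
    intro u v hu hv x
    rw [lie_add, hu x, hv x, smul_add]
  zero_mem' := by
    intro x
    rw [lie_zero, smul_zero]
  smul_mem' := by
    intro t v hv x
    rw [lie_smul, hv x, smul_comm]

open LieModule

section Aux

variable {g : Type*} [LieRing g] [LieAlgebra ℂ g] [FiniteDimensional ℂ g]
  {H : LieSubalgebra ℂ g} [H.IsCartanSubalgebra]
  {M : Type*} [AddCommGroup M] [Module ℂ M] [LieRingModule g M] [LieModule ℂ g M]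

lemma mem_wtSpace {N : Type*} [AddCommGroup N] [Module ℂ N] [LieRingModule g N]
    [LieModule ℂ g N] {χ : H → ℂ} {v : N} :
    v ∈ wtSpace H N χ ↔ ∀ x : H, ⁅(x : g), v⁆ = χ x • v := Iff.rfl

lemma wtSpace_le_gen {N : Type*} [AddCommGroup N] [Module ℂ N] [LieRingModule g N]
    [LieModule ℂ g N] {χ : H → ℂ} {v : N} (hv : v ∈ wtSpace H N χ) :
    v ∈ genWeightSpace N χ := by
  apply weightSpace_le_genWeightSpace
  rw [mem_weightSpace]
  intro x
  rw [LieSubalgebra.coe_bracket_of_module]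
  exact hv x

/-- shift lemma : an eigen root vector maps a weight space into the shifted weight space. -/
lemma wtSpace_lie_mem {β ψ : H → ℂ} {X : g} (hX : X ∈ wtSpace H g β)
    {m : M} (hm : m ∈ wtSpace H M ψ) : ⁅X, m⁆ ∈ wtSpace H M (ψ + β) := by
  intro x
  rw [leibniz_lie, hX x, hm x, smul_lie, lie_smul, Pi.add_apply, add_smul]
  abel

/-- the support is monotone along roots, by injectivity of root vector actions. -/
lemma aux_mono
    (hfd : ∀ χ : H → ℂ, FiniteDimensional ℂ (wtSpace H M χ))
    (hcusp : ∀ α : H → ℂ, α ≠ 0 → ∀ X ∈ wtSpace H g α, X ≠ 0 →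
      Function.Injective fun m : M => ⁅X, m⁆)
    {β : H → ℂ} (hβ0 : β ≠ 0) (hβ : genWeightSpace g β ≠ (⊥ : LieSubmodule ℂ H g))
    (ψ : H → ℂ) :
    Module.finrank ℂ (wtSpace H M ψ) ≤ Module.finrank ℂ (wtSpace H M (ψ + β)) := by
  haveI := hfd (ψ + β)
  obtain ⟨e, he0, he⟩ := exists_forall_lie_eq_smul ℂ H g ⟨β, hβ⟩
  have heW : e ∈ wtSpace H g β := by
    intro x
    rw [← LieSubalgebra.coe_bracket_of_module]
    exact he x
  have hinj := hcusp β hβ0 e heW he0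
  have hmap : ∀ m ∈ wtSpace H M ψ, (LieModule.toEnd ℂ g M e) m ∈ wtSpace H M (ψ + β) := by
    intro m hm
    simpa [LieModule.toEnd_apply_apply] using wtSpace_lie_mem heW hm
  have hFinj : Function.Injective ((LieModule.toEnd ℂ g M e).restrict hmap) := by
    intro a b hab
    apply Subtype.ext
    apply hinj
    have := congrArg Subtype.val hab
    simpa [LinearMap.restrict_apply, LieModule.toEnd_apply_apply] using this
  exact LinearMap.finrank_le_finrank_of_injective hFinj

lemma aux_word
    (hfd : ∀ χ : H → ℂ, FiniteDimensional ℂ (wtSpace H M χ))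
    (hcusp : ∀ α : H → ℂ, α ≠ 0 → ∀ X ∈ wtSpace H g α, X ≠ 0 →
      Function.Injective fun m : M => ⁅X, m⁆)
    {q : H → ℂ}
    (hq : q ∈ AddSubmonoid.closure
      {β : H → ℂ | β ≠ 0 ∧ genWeightSpace g β ≠ (⊥ : LieSubmodule ℂ H g)}) :
    ∀ ψ, Module.finrank ℂ (wtSpace H M ψ) ≤ Module.finrank ℂ (wtSpace H M (ψ + q)) := by
  induction hq using AddSubmonoid.closure_induction with
  | mem β hβ => exact fun ψ => aux_mono hfd hcusp hβ.1 hβ.2 ψ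
  | zero => exact fun ψ => le_of_eq (by rw [add_zero])
  | add a b _ _ iha ihb =>
    intro ψ
    calc Module.finrank ℂ (wtSpace H M ψ) ≤ Module.finrank ℂ (wtSpace H M (ψ + a)) := iha ψ
      _ ≤ Module.finrank ℂ (wtSpace H M ((ψ + a) + b)) := ihb (ψ + a)
      _ = Module.finrank ℂ (wtSpace H M (ψ + (a + b))) := by rw [add_assoc]

/-- Reachability within the support of a simple module. -/
lemma aux_reach
    (hsimple : ∀ q : LieSubmodule ℂ g M, q = ⊥ ∨ q = ⊤)
    {χ₁ χ₂ : H → ℂ} (h1 : wtSpace H M χ₁ ≠ ⊥) (h2 : wtSpace H M χ₂ ≠ ⊥) :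
    ∃ q ∈ AddSubmonoid.closure
      {β : H → ℂ | β ≠ 0 ∧ genWeightSpace g β ≠ (⊥ : LieSubmodule ℂ H g)},
      χ₁ + q = χ₂ := by
  classical
  set S : Set (H → ℂ) := {β : H → ℂ | β ≠ 0 ∧ genWeightSpace g β ≠ (⊥ : LieSubmodule ℂ H g)}
    with hS
  set P := AddSubmonoid.closure S with hP
  set NH : LieSubmodule ℂ H M := ⨆ q : P, genWeightSpace M (χ₁ + (q : H → ℂ)) with hNH
  -- stability of NH under the action of all of g
  have keyβ : ∀ (β : H → ℂ) (x : g), x ∈ genWeightSpace g β →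
      ∀ m ∈ NH, ⁅x, m⁆ ∈ NH := by
    intro β x hx m hm
    have hNH' : m ∈ ⨆ q : P, (genWeightSpace M (χ₁ + (q : H → ℂ)) : Submodule ℂ M) := by
      rw [← LieSubmodule.iSup_toSubmodule]
      exact hm
    refine Submodule.iSup_induction (motive := fun m => ⁅x, m⁆ ∈ NH)
      (fun q : P => (genWeightSpace M (χ₁ + (q : H → ℂ)) : Submodule ℂ M)) hNH' ?_ ?_ ?_
    · rintro ⟨q, hq⟩ n hn
      have hbr : ⁅x, n⁆ ∈ genWeightSpace M (β + (χ₁ + q)) :=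
        LieAlgebra.lie_mem_genWeightSpace_of_mem_genWeightSpace hx hn
      by_cases hβ0 : β = 0
      · subst hβ0
        rw [zero_add] at hbr
        exact le_iSup (fun q : P => genWeightSpace M (χ₁ + (q : H → ℂ))) ⟨q, hq⟩ hbr
      by_cases hβbot : genWeightSpace g β = (⊥ : LieSubmodule ℂ H g)
      · rw [hβbot, LieSubmodule.mem_bot] at hx
        rw [hx, zero_lie]
        exact NH.zero_mem
      · have hqβ : q + β ∈ P := P.add_mem hq (AddSubmonoid.subset_closure ⟨hβ0, hβbot⟩)
        have : β + (χ₁ + q) = χ₁ + (q + β) := by abel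
        rw [this] at hbr
        exact le_iSup (fun q : P => genWeightSpace M (χ₁ + (q : H → ℂ))) ⟨q + β, hqβ⟩ hbr
    · show ⁅x, (0 : M)⁆ ∈ NH
      rw [lie_zero]; exact NH.zero_mem
    · intro a b ha hb
      show ⁅x, a + b⁆ ∈ NH
      rw [lie_add]
      exact NH.add_mem ha hb
  have key : ∀ (x : g), ∀ m ∈ NH, ⁅x, m⁆ ∈ NH := by
    intro x
    have hx : x ∈ ⨆ β : H → ℂ, (genWeightSpace g β : Submodule ℂ g) := by
      rw [← LieSubmodule.iSup_toSubmodule, iSup_genWeightSpace_eq_top ℂ H g]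
      exact Submodule.mem_top
    refine Submodule.iSup_induction (motive := fun x => ∀ m ∈ NH, ⁅x, m⁆ ∈ NH)
      (fun β : H → ℂ => (genWeightSpace g β : Submodule ℂ g)) hx ?_ ?_ ?_
    · exact fun β x hx => keyβ β x hx
    · intro m _
      show ⁅(0 : g), m⁆ ∈ NH
      rw [zero_lie]
      exact NH.zero_mem
    · intro a b ha hb m hm
      show ⁅a + b, m⁆ ∈ NH
      rw [add_lie]
      exact NH.add_mem (ha m hm) (hb m hm)
  set N : LieSubmodule ℂ g M :=
    { toSubmodule := NH.toSubmodule
      lie_mem := fun {x m} hm => key x m hm } with hN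
  have hwle : ∀ (q : H → ℂ), q ∈ P → wtSpace H M (χ₁ + q) ≤ NH.toSubmodule := by
    intro q hq v hv
    exact le_iSup (fun q : P => genWeightSpace M (χ₁ + (q : H → ℂ))) ⟨q, hq⟩ (wtSpace_le_gen hv)
  rcases hsimple N with hbot | htop
  · exfalso
    apply h1
    rw [eq_bot_iff]
    intro v hv
    have h0 : (0 : H → ℂ) ∈ P := P.zero_mem
    have : v ∈ NH.toSubmodule := hwle 0 h0 (by rwa [add_zero])
    rw [hN] at hbot
    have hbot' : NH.toSubmodule = ⊥ := congrArg LieSubmodule.toSubmodule hbot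
    rw [hbot'] at this
    exact this
  · -- N = ⊤, so χ₂ is reachable
    by_contra hno
    push_neg at hno
    obtain ⟨v, hv, hv0⟩ := Submodule.exists_mem_ne_zero_of_ne_bot h2
    have hv2 : v ∈ genWeightSpace M χ₂ := wtSpace_le_gen hv
    have hvN : v ∈ NH := by
      have : v ∈ N := by rw [htop]; exact LieSubmodule.mem_top _
      exact this
    have hle : NH ≤ ⨆ ψ, ⨆ (_ : ψ ≠ χ₂), genWeightSpace M ψ := by
      refine iSup_le ?_
      rintro ⟨q, hq⟩
      exact le_iSup₂ (f := fun ψ (_ : ψ ≠ χ₂) => genWeightSpace M ψ) (χ₁ + q) (hno q hq)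
    have hdisj := iSupIndep_genWeightSpace ℂ H M χ₂
    have : v ∈ (⊥ : LieSubmodule ℂ H M) := hdisj.le_bot ⟨hv2, hle hvN⟩
    rw [LieSubmodule.mem_bot] at this
    exact hv0 this

end Aux


/-- Let `g` be a finite-dimensional reductive complex Lie algebra with
Cartan subalgebra `H` and let `M` be a simple cuspidal weight `g`-module: `M` is
`H`-diagonalizable with finite-dimensional weight spaces, has no nontrivial Lie
submodule, and every nonzero root vector (a nonzero `X ∈ g_α` for a root `α`) acts
injectively on `M`.  Then every nonzero root vector acts *bijectively* on `M`, and all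
weight spaces in the support of `M` have the same (finite) dimension. -/
theorem stmt_15
    (g : Type*) [LieRing g] [LieAlgebra ℂ g] [FiniteDimensional ℂ g]
    (hred : LieAlgebra.radical ℂ g = LieAlgebra.center ℂ g)
    (H : LieSubalgebra ℂ g) [H.IsCartanSubalgebra]
    (M : Type*) [AddCommGroup M] [Module ℂ M] [LieRingModule g M] [LieModule ℂ g M]
    [Nontrivial M]
    -- `M` is a weight module
    (hdiag : (⨆ χ : H → ℂ, wtSpace H M χ) = ⊤)
    (hfd : ∀ χ : H → ℂ, FiniteDimensional ℂ (wtSpace H M χ))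
    -- `M` is simple
    (hsimple : ∀ q : LieSubmodule ℂ g M, q = ⊥ ∨ q = ⊤)
    -- `M` is cuspidal: every nonzero root vector acts injectively
    (hcusp : ∀ α : H → ℂ, α ≠ 0 → ∀ X ∈ wtSpace H g α, X ≠ 0 →
      Function.Injective fun m : M => ⁅X, m⁆) :
    -- every nonzero root vector acts bijectively ...
    (∀ α : H → ℂ, α ≠ 0 → ∀ X ∈ wtSpace H g α, X ≠ 0 →
      Function.Bijective fun m : M => ⁅X, m⁆) ∧
    -- ... and all weight spaces in the support have the same dimension
    ∀ χ₁ χ₂ : H → ℂ, wtSpace H M χ₁ ≠ ⊥ → wtSpace H M χ₂ ≠ ⊥ →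
      Module.finrank ℂ (wtSpace H M χ₁) = Module.finrank ℂ (wtSpace H M χ₂) := by
  classical
  set d : (H → ℂ) → ℕ := fun χ => Module.finrank ℂ (wtSpace H M χ) with hd
  have hpos : ∀ χ : H → ℂ, wtSpace H M χ ≠ ⊥ → 0 < d χ := by
    intro χ h
    haveI := hfd χ
    have : Nontrivial (wtSpace H M χ) := Submodule.nontrivial_iff_ne_bot.mpr h
    exact Module.finrank_pos
  have hposinv : ∀ χ : H → ℂ, 0 < d χ → wtSpace H M χ ≠ ⊥ := by
    intro χ h hb
    haveI := hfd χ
    exact Submodule.nontrivial_iff_ne_bot.mp (Module.finrank_pos_iff.mp h) hb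
  -- a nonzero weight of M exists
  obtain ⟨φ₀, hφ₀⟩ : ∃ χ : H → ℂ, wtSpace H M χ ≠ ⊥ := by
    by_contra h
    push_neg at h
    have : (⊤ : Submodule ℂ M) = ⊥ := by
      rw [← hdiag]
      simp [h]
    obtain ⟨a, b, hab⟩ := exists_pair_ne M
    apply hab
    have ha : a ∈ (⊥ : Submodule ℂ M) := this ▸ Submodule.mem_top
    have hb : b ∈ (⊥ : Submodule ℂ M) := this ▸ Submodule.mem_top
    rw [Submodule.mem_bot] at ha hb
    rw [ha, hb]
  have main1 : ∀ α : H → ℂ, α ≠ 0 → ∀ X ∈ wtSpace H g α, X ≠ 0 →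
      Function.Bijective fun m : M => ⁅X, m⁆ := by
    intro α hα X hX hX0
    have hinj := hcusp α hα X hX hX0
    have hroot : genWeightSpace g α ≠ (⊥ : LieSubmodule ℂ H g) := by
      intro hb
      have : X ∈ (⊥ : LieSubmodule ℂ H g) := hb ▸ wtSpace_le_gen hX
      rw [LieSubmodule.mem_bot] at this
      exact hX0 this
    have hαmem : α ∈ AddSubmonoid.closure
        {β : H → ℂ | β ≠ 0 ∧ genWeightSpace g β ≠ (⊥ : LieSubmodule ℂ H g)} :=
      AddSubmonoid.subset_closure ⟨hα, hroot⟩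
    have h1 : wtSpace H M (φ₀ + α) ≠ ⊥ :=
      hposinv _ (lt_of_lt_of_le (hpos φ₀ hφ₀) (aux_word hfd hcusp hαmem φ₀))
    obtain ⟨q, hq, hqe⟩ := aux_reach hsimple h1 hφ₀
    have hqneg : q = -α := by
      have : φ₀ + α + q = φ₀ := hqe
      funext x
      have := congrFun this x
      simp only [Pi.add_apply, Pi.neg_apply] at this ⊢
      linear_combination this
    -- d is invariant under subtracting α
    have hle1 : ∀ ψ : H → ℂ, d ψ ≤ d (ψ - α) := by
      intro ψ
      have := aux_word hfd hcusp hq ψ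
      rwa [hqneg, ← sub_eq_add_neg] at this
    have hle2 : ∀ ψ : H → ℂ, d (ψ - α) ≤ d ψ := by
      intro ψ
      have := aux_word hfd hcusp hαmem (ψ - α)
      rwa [sub_add_cancel] at this
    -- surjectivity
    have hsurjψ : ∀ ψ : H → ℂ, wtSpace H M ψ ≤ LinearMap.range (LieModule.toEnd ℂ g M X) := by
      intro ψ w hw
      haveI := hfd ψ
      haveI := hfd (ψ - α)
      have hmap : ∀ m ∈ wtSpace H M (ψ - α), (LieModule.toEnd ℂ g M X) m ∈ wtSpace H M ψ := by
        intro m hm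
        have := wtSpace_lie_mem hX hm
        rw [sub_add_cancel] at this
        simpa [LieModule.toEnd_apply_apply] using this
      have hFinj : Function.Injective ((LieModule.toEnd ℂ g M X).restrict hmap) := by
        intro a b hab
        apply Subtype.ext
        apply hinj
        have := congrArg Subtype.val hab
        simpa [LinearMap.restrict_apply, LieModule.toEnd_apply_apply] using this
      have heq : Module.finrank ℂ (wtSpace H M (ψ - α)) = Module.finrank ℂ (wtSpace H M ψ) :=
        le_antisymm (hle2 ψ) (hle1 ψ)
      have hFsurj := (LinearMap.injective_iff_surjective_of_finrank_eq_finrank heq).mp hFinj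
      obtain ⟨⟨m, hm⟩, hFm⟩ := hFsurj ⟨w, hw⟩
      refine ⟨m, ?_⟩
      have := congrArg Subtype.val hFm
      simpa [LinearMap.restrict_apply] using this
    have hsurj : Function.Surjective fun m : M => ⁅X, m⁆ := by
      intro w
      have hw : w ∈ (⊤ : Submodule ℂ M) := Submodule.mem_top
      rw [← hdiag] at hw
      have hle : (⨆ χ : H → ℂ, wtSpace H M χ) ≤ LinearMap.range (LieModule.toEnd ℂ g M X) :=
        iSup_le hsurjψ
      obtain ⟨m, hm⟩ := hle hw
      exact ⟨m, by simpa [LieModule.toEnd_apply_apply] using hm⟩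
    exact ⟨hinj, hsurj⟩
  refine ⟨main1, ?_⟩
  intro χ₁ χ₂ h1 h2
  obtain ⟨q, hq, hqe⟩ := aux_reach hsimple h1 h2
  obtain ⟨q', hq', hqe'⟩ := aux_reach hsimple h2 h1
  have e1 : d χ₁ ≤ d χ₂ := by
    have := aux_word hfd hcusp hq χ₁
    rwa [hqe] at this
  have e2 : d χ₂ ≤ d χ₁ := by
    have := aux_word hfd hcusp hq' χ₂
    rwa [hqe'] at this
  exact le_antisymm e1 e2
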